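/- Let E be a finite-dimensional real inner product space and let X and Y be nonempty compact convex subsets of E with Y ⊆ X. Then 0 ∈ Z for every Z ∈ X ÷ Y. -/
import Mathlib


open Pointwise
open scoped RealInnerProductSpace

/-- The support function of a set `A ⊆ E`: `h_A(p) = sup_{a ∈ A} ⟪p, a⟫`. -/
noncomputable def supportFn {E : Type*} [NormedAddCommGroup E] [InnerProductSpace ℝ E]
    (A : Set E) (p : E) : ℝ :=
  sSup ((fun a => ⟪p, a⟫) '' A)

/-- `Z` is a member of the generalized Minkowski–Pontryagin difference `X ÷ Y`:
`Z` is nonempty, compact, convex, `X ⊆ Y + Z`, and no nonempty compact convex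
proper subset `Z' ⊊ Z` satisfies `X ⊆ Y + Z'`. -/
def MemGMPDiff {E : Type*} [NormedAddCommGroup E] [InnerProductSpace ℝ E]
    (X Y Z : Set E) : Prop :=
  Z.Nonempty ∧ IsCompact Z ∧ Convex ℝ Z ∧ X ⊆ Y + Z ∧
    ∀ Z' : Set E, Z'.Nonempty → IsCompact Z' → Convex ℝ Z' → Z' ⊂ Z → ¬ X ⊆ Y + Z'

theorem gmpDiff_monotonicity
    {E : Type*} [NormedAddCommGroup E] [InnerProductSpace ℝ E] [FiniteDimensional ℝ E]
    (X Y : Set E)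
    (hXne : X.Nonempty) (hXc : IsCompact X) (hXconv : Convex ℝ X)
    (hYne : Y.Nonempty) (hYc : IsCompact Y) (hYconv : Convex ℝ Y)
    (hYX : Y ⊆ X) :
    ∀ Z : Set E, MemGMPDiff X Y Z → (0 : E) ∈ Z := by
  rintro Z ⟨hZne, hZc, hZconv, hXYZ, -⟩
  have hstep : ∀ y : Y, ∃ (y' : Y) (z : Z), (y : E) = (y' : E) + (z : E) := by
    rintro ⟨y, hy⟩
    have hyX : y ∈ Y + Z := hXYZ (hYX hy)
    rw [Set.mem_add] at hyX
    obtain ⟨a, ha, b, hb, hab⟩ := hyX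
    exact ⟨⟨a, ha⟩, ⟨b, hb⟩, hab.symm⟩
  choose f g hfg using hstep
  obtain ⟨y0, hy0⟩ := hYne
  set ys : ℕ → Y := fun n => f^[n] ⟨y0, hy0⟩ with hys
  have hysucc : ∀ n, ys (n + 1) = f (ys n) := by
    intro n
    simp [hys, Function.iterate_succ_apply']
  -- telescoping sum
  have hsum : ∀ n, (y0 : E) - (ys n : E) = ∑ i ∈ Finset.range n, (g (ys i) : E) := by
    intro n
    induction n with
    | zero => simp [hys]
    | succ n ih =>
      have h1 : (ys n : E) = (ys (n + 1) : E) + (g (ys n) : E) := by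
        rw [hysucc n]; exact hfg (ys n)
      rw [Finset.sum_range_succ, ← ih]
      have := h1
      abel_nf
      abel_nf at this
      linear_combination (norm := abel) this
  -- averages belong to Z
  have hmem : ∀ n : ℕ, 1 ≤ n → ((n : ℝ)⁻¹ • ((y0 : E) - (ys n : E))) ∈ Z := by
    intro n hn
    have hn' : (0 : ℝ) < (n : ℝ) := by exact_mod_cast hn
    rw [hsum n, Finset.smul_sum]
    refine hZconv.sum_mem (fun i _ => by positivity) ?_ (fun i _ => (g (ys i)).2)
    rw [Finset.sum_const, Finset.card_range, nsmul_eq_mul, mul_inv_cancel₀ hn'.ne']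
  -- bound on Y
  obtain ⟨C, hC⟩ := hYc.isBounded.exists_norm_le
  -- tendsto 0
  have htend : Filter.Tendsto (fun n : ℕ => (n : ℝ)⁻¹ • ((y0 : E) - (ys n : E)))
      Filter.atTop (nhds 0) := by
    refine squeeze_zero_norm (a := fun n : ℕ => (2 * C) / n) (fun n => ?_)
      (tendsto_const_div_atTop_nhds_zero_nat _)
    rw [norm_smul, norm_inv, Real.norm_natCast]
    simp only [div_eq_inv_mul]
    rcases Nat.eq_zero_or_pos n with h0 | h0
    · simp [h0]
    · have hn' : (0 : ℝ) < (n : ℝ) := by exact_mod_cast h0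
      refine mul_le_mul_of_nonneg_left ?_ (by positivity)
      calc ‖(y0 : E) - (ys n : E)‖ ≤ ‖(y0 : E)‖ + ‖(ys n : E)‖ := norm_sub_le _ _
        _ ≤ C + C := add_le_add (hC _ hy0) (hC _ (ys n).2)
        _ = 2 * C := by ring
  exact hZc.isClosed.mem_of_tendsto htend
    (Filter.eventually_atTop.mpr ⟨1, fun n hn => hmem n hn⟩)
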